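/- Let q be an odd prime power, m, n > 1 coprime integers, and k, ℓ nonnegative integers. Let α be a normal element of 𝔽_{q^m} over 𝔽_q and β a normal element of 𝔽_{q^n} over 𝔽_q. Then α^{q^k}β + αβ^{q^ℓ} is a normal element of 𝔽_{q^{mn}} over 𝔽_q if and only if one of the following holds: (i) m and n are both odd; (ii) m is even and ν₂(m) ≤ ν₂(k); (iii) n is even and ν₂(n) ≤ ν₂(ℓ). Moreover, if q is even, α^{q^k}β + αβ^{q^ℓ} is never normal. -/

import Mathlib

open Polynomial Module

section AuxNormal

lemma pow_mod_eq_one {K : Type*} [Monoid K] (x : K) {N : ℕ} (h : x ^ N = 1) (j : ℕ) :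
    x ^ j = x ^ (j % N) := by
  conv_lhs => rw [← Nat.div_add_mod j N]
  rw [pow_add, pow_mul, h, one_pow, one_mul]


/-- The fixed intermediate field of `x ↦ x^Q`. -/
def fixedIF (F K : Type*) [Field F] [Field K] [Algebra F K] (Q : ℕ) (hQ : 0 < Q)
    (hadd : ∀ x y : K, (x + y) ^ Q = x ^ Q + y ^ Q)
    (hc : ∀ c : F, (algebraMap F K c) ^ Q = algebraMap F K c) : IntermediateField F K where
  carrier := {x | x ^ Q = x}
  mul_mem' := by
    intro a b ha hb
    simp only [Set.mem_setOf_eq] at *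
    rw [mul_pow, ha, hb]
  one_mem' := one_pow Q
  add_mem' := by
    intro a b ha hb
    simp only [Set.mem_setOf_eq] at *
    rw [hadd, ha, hb]
  algebraMap_mem' := hc
  inv_mem' := by
    intro x hx
    simp only [Set.mem_setOf_eq] at *
    rw [inv_pow, hx]

lemma mem_fixedIF {F K : Type*} [Field F] [Field K] [Algebra F K] {Q : ℕ} {hQ hadd hc} (x : K) :
    x ∈ fixedIF F K Q hQ hadd hc ↔ x ^ Q = x := Iff.rfl


lemma pow_q_add' {K : Type*} [Monoid K] (x : K) (q i j : ℕ) :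
    (x ^ q ^ i) ^ q ^ j = x ^ q ^ (i + j) := by
  rw [← pow_mul, ← pow_add]

lemma pow_q_period' {K : Type*} [Monoid K] (x : K) (q m : ℕ) (hm : 0 < m)
    (hx : x ^ q ^ m = x) : ∀ i, x ^ q ^ i = x ^ q ^ (i % m) := by
  have step : ∀ j, x ^ q ^ (j + m) = x ^ q ^ j := by
    intro j
    rw [Nat.add_comm, ← pow_q_add' x q m j, hx]
  have key : ∀ t r, x ^ q ^ (m * t + r) = x ^ q ^ r := by
    intro t
    induction t with
    | zero => simp
    | succ t ih =>
      intro r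
      have h1 : m * (t + 1) + r = m * t + r + m := by ring
      rw [h1, step, ih]
  intro i
  conv_lhs => rw [← Nat.div_add_mod i m]
  exact key (i / m) (i % m)

lemma pow_q_congr' {K : Type*} [Monoid K] (x : K) (q m : ℕ) (hm : 0 < m)
    (hx : x ^ q ^ m = x) {i j : ℕ} (hij : i ≡ j [MOD m]) : x ^ q ^ i = x ^ q ^ j := by
  rw [pow_q_period' x q m hm hx i, pow_q_period' x q m hm hx j, hij]

lemma finrank_fixed {F K : Type*} [Field F] [Fintype F] [Field K] [Algebra F K]
    {q m : ℕ} (hq : q = Fintype.card F) (hm : 0 < m)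
    (E : IntermediateField F K) (hE : ∀ y : K, y ∈ E ↔ y ^ q ^ m = y)
    (x : K) (hxmem : x ^ q ^ m = x)
    (hnorm : LinearIndependent F fun i : Fin m => x ^ q ^ (i : ℕ)) :
    finrank F ↥E = m := by
  classical
  have hq2 : 1 < q := hq ▸ Fintype.one_lt_card
  have hQ2 : 1 < q ^ m := Nat.one_lt_pow hm.ne' hq2
  set V : Submodule F K := Submodule.span F (Set.range fun i : Fin m => x ^ q ^ (i : ℕ)) with hV
  have hgen : ∀ i : Fin m, x ^ q ^ (i : ℕ) ∈ E := by
    intro i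
    rw [hE, pow_q_add']
    exact pow_q_congr' x q m hm hxmem (Nat.add_mod_right _ _)
  have hVE : V ≤ Subalgebra.toSubmodule E.toSubalgebra := by
    rw [hV, Submodule.span_le]
    rintro y ⟨i, rfl⟩
    exact hgen i
  -- the fixed field is contained in the root set of X^(q^m) - X
  set P : K[X] := X ^ q ^ m - X with hP
  have hPne : P ≠ 0 := by
    intro h
    have h' : (X : K[X]) ^ q ^ m = X := sub_eq_zero.1 h
    have := congrArg natDegree h'
    rw [natDegree_X_pow, natDegree_X] at this
    omega
  have hEroots : (E : Set K) ⊆ ↑P.roots.toFinset := by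
    intro y hy
    rw [Finset.mem_coe, Multiset.mem_toFinset, mem_roots hPne]
    simp only [IsRoot, hP, eval_sub, eval_pow, eval_X]
    rw [(hE y).1 hy, sub_self]
  have hEfin : (E : Set K).Finite := Set.Finite.subset (P.roots.toFinset.finite_toSet) hEroots
  have hcardE : (E : Set K).ncard ≤ q ^ m := by
    refine le_trans (Set.ncard_le_ncard hEroots (P.roots.toFinset.finite_toSet)) ?_
    rw [Set.ncard_coe_finset]
    refine le_trans (Multiset.toFinset_card_le _) (le_trans (P.card_roots') ?_)
    refine le_trans (natDegree_sub_le _ _) ?_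
    simp only [natDegree_X_pow, natDegree_X]
    omega
  -- cardinality of V
  haveI : FiniteDimensional F ↥V := FiniteDimensional.span_of_finite F (Set.finite_range _)
  haveI : Finite ↥V := Module.finite_of_finite F
  haveI : Fintype ↥V := Fintype.ofFinite _
  have hfrV : finrank F ↥V = m := by
    rw [hV, finrank_span_eq_card hnorm, Fintype.card_fin]
  have hcardV : (V : Set K).ncard = q ^ m := by
    have h1 : (V : Set K).ncard = Nat.card ↥V := (Nat.card_coe_set_eq _).symm
    rw [h1, Nat.card_eq_fintype_card, card_eq_pow_finrank (K := F) (V := ↥V), hfrV, hq]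
  -- conclude set equality
  have hsub : (V : Set K) ⊆ (E : Set K) := hVE
  have hset : (V : Set K) = (E : Set K) :=
    Set.eq_of_subset_of_ncard_le hsub (le_trans hcardE hcardV.ge) hEfin
  have hmod : Subalgebra.toSubmodule E.toSubalgebra = V := by
    apply le_antisymm _ hVE
    intro y hy
    have : y ∈ (V : Set K) := hset.symm ▸ (hy : y ∈ (E : Set K))
    exact this
  have : finrank F ↥E = finrank F ↥V := by
    rw [← hmod]
    rfl
  rw [this, hfrV]

section
variable {F K : Type*} [Field F] [Fintype F] [Field K] [Algebra F K]
lemma prod_indep {q m n : ℕ} (hq : q = Fintype.card F) (hm : 0 < m) (hn : 0 < n)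
    (hmn : Nat.Coprime m n)
    (hadd : ∀ (j : ℕ) (x y : K), (x + y) ^ q ^ j = x ^ q ^ j + y ^ q ^ j)
    (hc : ∀ (j : ℕ) (c : F), (algebraMap F K c) ^ q ^ j = algebraMap F K c)
    (α β : K) (hαmem : α ^ q ^ m = α)
    (hαnorm : LinearIndependent F fun i : Fin m => α ^ q ^ (i : ℕ))
    (hβmem : β ^ q ^ n = β)
    (hβnorm : LinearIndependent F fun j : Fin n => β ^ q ^ (j : ℕ)) :
    LinearIndependent F fun s : Fin (m * n) => (α * β) ^ q ^ (s : ℕ) := by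
  have hQm : 0 < q ^ m := pow_pos (by rw [hq]; exact Fintype.card_pos) m
  have hQn : 0 < q ^ n := pow_pos (by rw [hq]; exact Fintype.card_pos) n
  set Em : IntermediateField F K := fixedIF F K (q ^ m) hQm (hadd m) (hc m) with hEm
  set En : IntermediateField F K := fixedIF F K (q ^ n) hQn (hadd n) (hc n) with hEn
  have hEmm : ∀ y : K, y ∈ Em ↔ y ^ q ^ m = y := fun y => Iff.rfl
  have hEnn : ∀ y : K, y ∈ En ↔ y ^ q ^ n = y := fun y => Iff.rfl
  have hfm : finrank F ↥Em = m := finrank_fixed hq hm Em hEmm α hαmem hαnorm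
  have hfn : finrank F ↥En = n := finrank_fixed hq hn En hEnn β hβmem hβnorm
  have hdisj : Em.LinearDisjoint ↥En :=
    IntermediateField.LinearDisjoint.of_finrank_coprime (by rw [hfm, hfn]; exact hmn)
  have hamem : ∀ i : Fin m, α ^ q ^ (i : ℕ) ∈ Em := by
    intro i
    rw [hEmm, pow_q_add']
    exact pow_q_congr' α q m hm hαmem (Nat.add_mod_right _ _)
  have hbmem : ∀ j : Fin n, β ^ q ^ (j : ℕ) ∈ En := by
    intro j
    rw [hEnn, pow_q_add']
    exact pow_q_congr' β q n hn hβmem (Nat.add_mod_right _ _)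
  set a : Fin m → ↥Em := fun i => ⟨α ^ q ^ (i : ℕ), hamem i⟩ with ha
  set b : Fin n → ↥En := fun j => ⟨β ^ q ^ (j : ℕ), hbmem j⟩ with hb
  have hA : LinearIndependent F a :=
    LinearIndependent.of_comp Em.val.toLinearMap hαnorm
  have hB : LinearIndependent F b :=
    LinearIndependent.of_comp En.val.toLinearMap hβnorm
  have hprod := hdisj.linearIndependent_mul' hA hB
  -- reindex
  have hmnpos : 0 < m * n := Nat.mul_pos hm hn
  set emap : Fin (m * n) → Fin m × Fin n :=
    fun s => (⟨(s : ℕ) % m, Nat.mod_lt _ hm⟩, ⟨(s : ℕ) % n, Nat.mod_lt _ hn⟩) with hemap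
  have hinj : Function.Injective emap := by
    intro s s' h
    rw [hemap] at h
    simp only [Prod.mk.injEq, Fin.mk.injEq] at h
    have h1 : (s : ℕ) ≡ (s' : ℕ) [MOD m] := h.1
    have h2 : (s : ℕ) ≡ (s' : ℕ) [MOD n] := h.2
    have h3 : (s : ℕ) ≡ (s' : ℕ) [MOD m * n] :=
      (Nat.modEq_and_modEq_iff_modEq_mul hmn).1 ⟨h1, h2⟩
    have : (s : ℕ) = (s' : ℕ) := by
      rwa [Nat.ModEq, Nat.mod_eq_of_lt s.isLt, Nat.mod_eq_of_lt s'.isLt] at h3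
    exact Fin.ext this
  have := hprod.comp emap hinj
  convert this using 1
  funext s
  simp only [Function.comp_apply, hemap, ha, hb]
  rw [mul_pow]
  rw [pow_q_period' α q m hm hαmem (s : ℕ), pow_q_period' β q n hn hβmem (s : ℕ)]
  rfl
end

section Unit
variable {F : Type*} [Field F]

lemma isUnit_mk_iff_isCoprime (g P : F[X]) :
    IsUnit (AdjoinRoot.mk g P) ↔ IsCoprime P g := by
  constructor
  · rintro ⟨u, hu⟩
    obtain ⟨V, hV⟩ := AdjoinRoot.mk_surjective (g := g) (↑u⁻¹)
    have h1 : AdjoinRoot.mk g (P * V) = 1 := by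
      rw [map_mul, ← hu, hV, Units.mul_inv]
    have h2 : g ∣ P * V - 1 := by
      rw [← AdjoinRoot.mk_eq_zero, map_sub, h1, map_one, sub_self]
    obtain ⟨c, hcc⟩ := h2
    exact ⟨V, -c, by linear_combination hcc⟩
  · rintro ⟨u, v, huv⟩
    refine IsUnit.of_mul_eq_one (AdjoinRoot.mk g u) ?_
    have : AdjoinRoot.mk g (u * P + v * g) = 1 := by rw [huv, map_one]
    rw [map_add, map_mul, map_mul, AdjoinRoot.mk_self, mul_zero, add_zero] at this
    rw [mul_comm] at this
    exact this

lemma not_isCoprime_of_common_root {K : Type*} [Field K] {P Q : K[X]} {ζ : K}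
    (hP : P.IsRoot ζ) (hQ : Q.IsRoot ζ) : ¬ IsCoprime P Q := by
  intro h
  have h1 : (X - C ζ) ∣ P := dvd_iff_isRoot.2 hP
  have h2 : (X - C ζ) ∣ Q := dvd_iff_isRoot.2 hQ
  exact Polynomial.not_isUnit_X_sub_C ζ (h.isUnit_of_dvd' h1 h2)

lemma exists_common_root_of_not_coprime {K : Type*} [Field K] [IsAlgClosed K] {P Q : K[X]}
    (hQ : Q ≠ 0) (h : ¬ IsCoprime P Q) : ∃ ζ : K, P.IsRoot ζ ∧ Q.IsRoot ζ := by
  classical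
  have hg : ¬ IsUnit (EuclideanDomain.gcd P Q) := fun hu =>
    h (EuclideanDomain.gcd_isUnit_iff.1 hu)
  have hdeg : (EuclideanDomain.gcd P Q).degree ≠ 0 := fun hd =>
    hg (isUnit_iff_degree_eq_zero.2 hd)
  obtain ⟨ζ, hζ⟩ := IsAlgClosed.exists_root _ hdeg
  refine ⟨ζ, ?_, ?_⟩
  · obtain ⟨c, hc⟩ := EuclideanDomain.gcd_dvd_left P Q
    rw [hc]
    simp [IsRoot, eval_mul, hζ.eq_zero]
  · obtain ⟨c, hc⟩ := EuclideanDomain.gcd_dvd_right P Q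
    rw [hc]
    simp [IsRoot, eval_mul, hζ.eq_zero]

end Unit

lemma exists_root_iff_two_pow_not_dvd {K : Type*} [Field K] [IsAlgClosed K]
    (h2 : (2 : K) ≠ 0) {N d : ℕ} (hN : 0 < N) :
    (∃ ζ : K, ζ ^ N = 1 ∧ ζ ^ d = -1) ↔ ¬ (2 ^ padicValNat 2 N ∣ d) := by
  have hne : (1 : K) ≠ -1 := fun h => h2 (by linear_combination h)
  constructor
  · rintro ⟨ζ, h1, hd⟩ hdvd
    by_cases hd0 : d = 0
    · rw [hd0, pow_zero] at hd; exact hne hd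
    have hfin : IsOfFinOrder ζ := isOfFinOrder_iff_pow_eq_one.2 ⟨N, hN, h1⟩
    set r := orderOf ζ with hrdef
    have hr : r ∣ N := orderOf_dvd_of_pow_eq_one h1
    have hr0 : r ≠ 0 := hfin.orderOf_pos.ne'
    set e := padicValNat 2 r with hedef
    have hrN : 2 ^ e ∣ N := dvd_trans (Nat.ordProj_dvd r 2) hr
    have heT : e ≤ padicValNat 2 N := by
      have := (Nat.Prime.pow_dvd_iff_le_factorization Nat.prime_two hN.ne').1 hrN
      rwa [Nat.factorization_def _ Nat.prime_two] at this
    have h2e : (2 : ℕ) ^ e ∣ d := dvd_trans (pow_dvd_pow 2 heT) hdvd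
    set w := r / 2 ^ e with hwdef
    have hwodd : ¬ 2 ∣ w := Nat.not_dvd_ordCompl Nat.prime_two hr0
    have hr2d : r ∣ d * 2 := orderOf_dvd_of_pow_eq_one (by rw [pow_mul, hd]; exact neg_one_sq)
    have cw2 : Nat.Coprime 2 w := (Nat.Prime.coprime_iff_not_dvd Nat.prime_two).2 hwodd
    have hw_d : w ∣ d :=
      Nat.Coprime.dvd_of_dvd_mul_right cw2.symm (dvd_trans (Nat.ordCompl_dvd r 2) hr2d)
    have hrd : r ∣ d := by
      have hsplit : 2 ^ e * w = r := Nat.ordProj_mul_ordCompl_eq_self r 2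
      rw [← hsplit]
      exact Nat.Coprime.mul_dvd_of_dvd_of_dvd (Nat.Coprime.pow_left e cw2) h2e hw_d
    have : ζ ^ d = 1 := orderOf_dvd_iff_pow_eq_one.1 hrd
    rw [this] at hd
    exact hne hd
  · intro hdvd
    have hd0 : d ≠ 0 := fun h => hdvd (h ▸ dvd_zero _)
    set v := padicValNat 2 d with hvdef
    have hv : v + 1 ≤ padicValNat 2 N := by
      by_contra hle
      push_neg at hle
      have hle' : padicValNat 2 N ≤ v := by omega
      exact hdvd (dvd_trans (pow_dvd_pow 2 hle') (Nat.ordProj_dvd d 2))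
    set M := 2 ^ (v + 1) with hMdef
    have hMN : M ∣ N := dvd_trans (pow_dvd_pow 2 hv) (Nat.ordProj_dvd N 2)
    haveI : NeZero ((M : ℕ) : K) := ⟨by
      rw [hMdef]
      push_cast
      exact pow_ne_zero _ h2⟩
    obtain ⟨ζ, hζ⟩ := HasEnoughRootsOfUnity.exists_primitiveRoot K M
    refine ⟨ζ, ?_, ?_⟩
    · obtain ⟨c, rfl⟩ := hMN
      rw [pow_mul, hζ.pow_eq_one, one_pow]
    · set w := d / 2 ^ v with hwdef
      have hsplit : 2 ^ v * w = d := Nat.ordProj_mul_ordCompl_eq_self d 2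
      have hwodd : Odd w :=
        Nat.odd_iff.2 (Nat.two_dvd_ne_zero.1 (Nat.not_dvd_ordCompl Nat.prime_two hd0))
      have hη2 : (ζ ^ 2 ^ v) ^ 2 = 1 := by
        rw [← pow_mul, ← pow_succ]
        exact hζ.pow_eq_one
      have hη1 : ζ ^ 2 ^ v ≠ 1 := by
        intro h
        have hMd : M ∣ 2 ^ v := (IsPrimitiveRoot.pow_eq_one_iff_dvd hζ _).1 h
        have := Nat.le_of_dvd (Nat.pow_pos (n := v) (by norm_num)) hMd
        rw [hMdef] at this
        exact absurd this (by
          have : (2:ℕ) ^ v < 2 ^ (v + 1) := Nat.pow_lt_pow_right (by norm_num) (Nat.lt_succ_self v)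
          omega)
      have hη : ζ ^ 2 ^ v = -1 := by
        have h3 : (ζ ^ 2 ^ v - 1) * (ζ ^ 2 ^ v + 1) = 0 := by linear_combination hη2
        rcases mul_eq_zero.1 h3 with h | h
        · exact absurd (by linear_combination h) hη1
        · linear_combination h
      rw [← hsplit, pow_mul, hη, hwodd.neg_one_pow]

lemma isUnit_rootpow_add_one_iff {F : Type*} [Field F] (N d : ℕ) (hN : 0 < N) :
    IsUnit (AdjoinRoot.root ((X : F[X]) ^ N - 1) ^ d + 1) ↔
      (ringChar F ≠ 2 ∧ 2 ^ padicValNat 2 N ∣ d) := by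
  set g : F[X] := X ^ N - 1 with hg
  have hmk : AdjoinRoot.root g ^ d + 1 = AdjoinRoot.mk g (X ^ d + 1) := by
    rw [map_add, map_pow, AdjoinRoot.mk_X, map_one]
  rw [hmk, isUnit_mk_iff_isCoprime]
  set K := AlgebraicClosure F with hK
  haveI : CharP K (ringChar F) :=
    charP_of_injective_algebraMap (algebraMap F K).injective (ringChar F)
  have hmap : ∀ P : F[X], IsCoprime (P.map (algebraMap F K)) (g.map (algebraMap F K)) ↔
      IsCoprime P g := fun P => isCoprime_map (algebraMap F K)
  have hmapg : g.map (algebraMap F K) = X ^ N - 1 := by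
    rw [hg]
    simp [Polynomial.map_sub, Polynomial.map_pow, Polynomial.map_X, Polynomial.map_one]
  have hmapP : (X ^ d + 1 : F[X]).map (algebraMap F K) = X ^ d + 1 := by
    simp [Polynomial.map_add, Polynomial.map_pow, Polynomial.map_X, Polynomial.map_one]
  rw [← hmap, hmapg, hmapP]
  have hgK : (X ^ N - 1 : K[X]) ≠ 0 := by
    intro h
    have h' : (X : K[X]) ^ N = 1 := sub_eq_zero.1 h
    have := congrArg natDegree h'
    rw [natDegree_X_pow, natDegree_one] at this
    omega
  have hroot1 : ∀ ζ : K, (X ^ N - 1 : K[X]).IsRoot ζ ↔ ζ ^ N = 1 := by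
    intro ζ
    simp [IsRoot, eval_sub, eval_pow, eval_X, eval_one, sub_eq_zero]
  have hroot2 : ∀ ζ : K, (X ^ d + 1 : K[X]).IsRoot ζ ↔ ζ ^ d = -1 := by
    intro ζ
    simp only [IsRoot, eval_add, eval_pow, eval_X, eval_one]
    constructor
    · intro h; linear_combination h
    · intro h; rw [h]; ring
  by_cases hchar : ringChar F = 2
  · haveI : CharP K 2 := hchar ▸ (inferInstance : CharP K (ringChar F))
    have hnc : ¬ IsCoprime (X ^ d + 1 : K[X]) (X ^ N - 1) := by
      apply not_isCoprime_of_common_root (ζ := 1)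
      · rw [hroot2]
        rw [one_pow]
        have h20 : (2 : K) = 0 := by
          have := CharP.cast_eq_zero K 2
          push_cast at this
          exact this
        linear_combination h20
      · rw [hroot1, one_pow]
    simp [hnc, hchar]
  · have h2K : (2 : K) ≠ 0 := by
      intro h
      have hdvd : (ringChar K : ℕ) ∣ 2 := by
        have := (ringChar.spec K 2).1 (by exact_mod_cast h)
        exact this
      have hrc : ringChar K = ringChar F := CharP.eq K (ringChar.charP K) inferInstance
      have h1 : ringChar K ≠ 1 := CharP.ringChar_ne_one
      rcases (Nat.dvd_prime Nat.prime_two).1 hdvd with h | h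
      · exact h1 h
      · exact hchar (hrc ▸ h)
    constructor
    · intro hcop
      refine ⟨hchar, ?_⟩
      by_contra hdvd
      obtain ⟨ζ, hζ⟩ := (exists_root_iff_two_pow_not_dvd h2K hN).2 hdvd
      exact not_isCoprime_of_common_root ((hroot2 ζ).2 hζ.2) ((hroot1 ζ).2 hζ.1) hcop
    · rintro ⟨-, hdvd⟩
      by_contra hncop
      obtain ⟨ζ, hP, hQ⟩ := exists_common_root_of_not_coprime hgK hncop
      exact (exists_root_iff_two_pow_not_dvd h2K hN).1
        ⟨ζ, (hroot1 ζ).1 hQ, (hroot2 ζ).1 hP⟩ hdvd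

lemma isUnit_sum_root_iff {F : Type*} [Field F] (N a b : ℕ) (hN : 0 < N) :
    IsUnit (AdjoinRoot.root ((X : F[X]) ^ N - 1) ^ a
        + AdjoinRoot.root ((X : F[X]) ^ N - 1) ^ b) ↔
      (ringChar F ≠ 2 ∧ (2 : ℤ) ^ padicValNat 2 N ∣ (a : ℤ) - b) := by
  set g : F[X] := X ^ N - 1 with hg
  have hrootN : AdjoinRoot.root g ^ N = 1 := by
    have h0 : AdjoinRoot.mk g g = 0 := AdjoinRoot.mk_self
    rw [hg, map_sub, map_pow, AdjoinRoot.mk_X, map_one, sub_eq_zero] at h0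
    exact h0
  have hru : IsUnit (AdjoinRoot.root g) := by
    refine IsUnit.of_mul_eq_one (AdjoinRoot.root g ^ (N - 1)) ?_
    rw [← pow_succ']
    rw [show N - 1 + 1 = N by omega, hrootN]
  have key : ∀ x y : ℕ, y ≤ x →
      (IsUnit (AdjoinRoot.root g ^ x + AdjoinRoot.root g ^ y) ↔
        (ringChar F ≠ 2 ∧ 2 ^ padicValNat 2 N ∣ x - y)) := by
    intro x y hyx
    have hfact : AdjoinRoot.root g ^ x + AdjoinRoot.root g ^ y
        = AdjoinRoot.root g ^ y * (AdjoinRoot.root g ^ (x - y) + 1) := by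
      rw [mul_add, mul_one, ← pow_add]
      congr 2
      omega
    rw [hfact, IsUnit.mul_iff]
    simp only [hru.pow, true_and]
    exact isUnit_rootpow_add_one_iff N (x - y) hN
  rcases le_total b a with h | h
  · rw [key a b h]
    constructor
    · rintro ⟨h1, h2⟩
      refine ⟨h1, ?_⟩
      have := Int.natCast_dvd_natCast.2 h2
      push_cast at this
      rwa [Nat.cast_sub h] at this
    · rintro ⟨h1, h2⟩
      refine ⟨h1, ?_⟩
      rw [← Int.natCast_dvd_natCast]
      push_cast
      rwa [Nat.cast_sub h]
  · rw [add_comm, key b a h]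
    constructor
    · rintro ⟨h1, h2⟩
      refine ⟨h1, ?_⟩
      rw [dvd_sub_comm]
      have := Int.natCast_dvd_natCast.2 h2
      push_cast at this
      rwa [Nat.cast_sub h] at this
    · rintro ⟨h1, h2⟩
      refine ⟨h1, ?_⟩
      rw [← Int.natCast_dvd_natCast]
      push_cast
      rw [Nat.cast_sub h]
      rwa [dvd_sub_comm] at h2

lemma dvd_iff_of_modeq {M x y : ℤ} (h : x ≡ y [ZMOD M]) : M ∣ x ↔ M ∣ y := by
  have hdd : M ∣ y - x := h.dvd
  constructor
  · intro hx
    have := dvd_add hx hdd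
    simpa using this
  · intro hy
    have := dvd_sub hy hdd
    simpa using this

lemma arith_endgame (m n k l a b : ℕ) (hm : 1 < m) (hn : 1 < n) (hmn : Nat.Coprime m n)
    (ha1 : a ≡ k [MOD m]) (ha2 : a ≡ 0 [MOD n]) (hb1 : b ≡ 0 [MOD m]) (hb2 : b ≡ l [MOD n]) :
    ((2 : ℤ) ^ padicValNat 2 (m * n) ∣ (a : ℤ) - b ↔
      ((Odd m ∧ Odd n) ∨
        (Even m ∧ 2 ^ padicValNat 2 m ∣ k) ∨
        (Even n ∧ 2 ^ padicValNat 2 n ∣ l))) := by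
  haveI : Fact (Nat.Prime 2) := ⟨Nat.prime_two⟩
  have hm0 : m ≠ 0 := by omega
  have hn0 : n ≠ 0 := by omega
  have hmul : padicValNat 2 (m * n) = padicValNat 2 m + padicValNat 2 n :=
    padicValNat.mul hm0 hn0
  have hA : (a : ℤ) ≡ (k : ℤ) [ZMOD (m : ℤ)] := Int.natCast_modEq_iff.2 ha1
  have hB : (b : ℤ) ≡ 0 [ZMOD (m : ℤ)] := by exact_mod_cast Int.natCast_modEq_iff.2 hb1
  have hA' : (a : ℤ) ≡ 0 [ZMOD (n : ℤ)] := by exact_mod_cast Int.natCast_modEq_iff.2 ha2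
  have hB' : (b : ℤ) ≡ (l : ℤ) [ZMOD (n : ℤ)] := Int.natCast_modEq_iff.2 hb2
  rcases Nat.even_or_odd m with hme | hmo
  · -- m even, so n odd
    have hno : Odd n := by
      rcases Nat.even_or_odd n with hne | hno
      · exfalso
        have h2 : (2 : ℕ) ∣ Nat.gcd m n :=
          Nat.dvd_gcd (even_iff_two_dvd.1 hme) (even_iff_two_dvd.1 hne)
        rw [hmn] at h2
        omega
      · exact hno
    have hvn : padicValNat 2 n = 0 :=
      padicValNat.eq_zero_of_not_dvd (by rw [Nat.odd_iff] at hno; omega)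
    have h2m : ((2 : ℤ) ^ padicValNat 2 m) ∣ (m : ℤ) := by
      have := Int.natCast_dvd_natCast.2 (Nat.ordProj_dvd m 2)
      push_cast at this
      exact this
    have hd : (a : ℤ) - b ≡ (k : ℤ) [ZMOD (m : ℤ)] := by
      have := hA.sub hB
      simpa using this
    have hd' : (a : ℤ) - b ≡ (k : ℤ) [ZMOD (2 : ℤ) ^ padicValNat 2 m] :=
      Int.ModEq.of_dvd h2m hd
    have hL : (2 : ℤ) ^ padicValNat 2 (m * n) ∣ (a : ℤ) - b ↔ 2 ^ padicValNat 2 m ∣ k := by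
      rw [hmul, hvn, Nat.add_zero, dvd_iff_of_modeq hd', ← Int.natCast_dvd_natCast]
      push_cast
      rfl
    rw [hL]
    have h1 : ¬ Odd m := Nat.not_odd_iff_even.2 hme
    have h2 : ¬ Even n := Nat.not_even_iff_odd.2 hno
    simp [h1, h2, hme]
  · rcases Nat.even_or_odd n with hne | hno
    · -- n even, m odd
      have hvm : padicValNat 2 m = 0 :=
        padicValNat.eq_zero_of_not_dvd (by rw [Nat.odd_iff] at hmo; omega)
      have h2n : ((2 : ℤ) ^ padicValNat 2 n) ∣ (n : ℤ) := by
        have := Int.natCast_dvd_natCast.2 (Nat.ordProj_dvd n 2)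
        push_cast at this
        exact this
      have hd : (a : ℤ) - b ≡ -(l : ℤ) [ZMOD (n : ℤ)] := by
        have := hA'.sub hB'
        simpa using this
      have hd' : (a : ℤ) - b ≡ -(l : ℤ) [ZMOD (2 : ℤ) ^ padicValNat 2 n] :=
        Int.ModEq.of_dvd h2n hd
      have hL : (2 : ℤ) ^ padicValNat 2 (m * n) ∣ (a : ℤ) - b ↔ 2 ^ padicValNat 2 n ∣ l := by
        rw [hmul, hvm, Nat.zero_add, dvd_iff_of_modeq hd', dvd_neg, ← Int.natCast_dvd_natCast]
        push_cast
        rfl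
      rw [hL]
      have h1 : ¬ Odd n := Nat.not_odd_iff_even.2 hne
      have h2 : ¬ Even m := Nat.not_even_iff_odd.2 hmo
      simp [h1, h2, hne]
    · -- both odd
      have hvm : padicValNat 2 m = 0 :=
        padicValNat.eq_zero_of_not_dvd (by rw [Nat.odd_iff] at hmo; omega)
      have hvn : padicValNat 2 n = 0 :=
        padicValNat.eq_zero_of_not_dvd (by rw [Nat.odd_iff] at hno; omega)
      rw [hmul, hvm, hvn]
      simp [hmo, hno]

end AuxNormal

/-- Theorem 4.7: for normal `α ∈ 𝔽_{q^m}`, `β ∈ 𝔽_{q^n}` with `gcd(m,n)=1`, `m,n > 1`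
and `q` odd, the element `α^{q^k}β + αβ^{q^ℓ}` is normal in `𝔽_{q^{mn}}` iff `m,n` are
both odd, or `m` is even with `ν₂(m) ≤ ν₂(k)`, or `n` is even with `ν₂(n) ≤ ν₂(ℓ)`.
(The condition `ν₂(m) ≤ ν₂(k)` is encoded as `2^{ν₂(m)} ∣ k`, which also handles
`k = 0`, where `ν₂(0) = ∞`.) If `q` is even, the element is never normal. -/
theorem stmt18 (F : Type*) [Field F] [Fintype F] (q : ℕ) (hq : q = Fintype.card F)
    (m n : ℕ) (hm : 1 < m) (hn : 1 < n) (hmn : Nat.Coprime m n) (k ℓ : ℕ)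
    (α β : AlgebraicClosure F)
    (hαmem : α ^ q ^ m = α)
    (hαnormal : LinearIndependent F fun i : Fin m => α ^ q ^ (i : ℕ))
    (hβmem : β ^ q ^ n = β)
    (hβnormal : LinearIndependent F fun j : Fin n => β ^ q ^ (j : ℕ)) :
    (Odd q →
      ((LinearIndependent F
          fun s : Fin (m * n) => (α ^ q ^ k * β + α * β ^ q ^ ℓ) ^ q ^ (s : ℕ)) ↔
        (Odd m ∧ Odd n) ∨
        (Even m ∧ 2 ^ padicValNat 2 m ∣ k) ∨
        (Even n ∧ 2 ^ padicValNat 2 n ∣ ℓ))) ∧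
    (Even q → ¬ LinearIndependent F
        fun s : Fin (m * n) => (α ^ q ^ k * β + α * β ^ q ^ ℓ) ^ q ^ (s : ℕ)) := by
  classical
  set p := ringChar F with hpdef
  haveI hcharF : CharP F p := ringChar.charP F
  obtain ⟨f, hpp, hcard⟩ := FiniteField.card F p
  haveI : Fact p.Prime := ⟨hpp⟩
  haveI : CharP (AlgebraicClosure F) p := charP_of_injective_algebraMap (algebraMap F (AlgebraicClosure F)).injective p
  have hqpf : q = p ^ (f : ℕ) := by rw [hq, hcard]
  have hm0 : 0 < m := by omega
  have hn0 : 0 < n := by omega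
  have hadd : ∀ (j : ℕ) (x y : AlgebraicClosure F), (x + y) ^ q ^ j = x ^ q ^ j + y ^ q ^ j := by
    intro j x y
    rw [hqpf, ← pow_mul]
    exact add_pow_char_pow x y p ((f : ℕ) * j)
  have hc : ∀ (j : ℕ) (c : F), (algebraMap F (AlgebraicClosure F) c) ^ q ^ j = algebraMap F (AlgebraicClosure F) c := by
    intro j c
    rw [← map_pow]
    congr 1
    rw [hq]
    exact FiniteField.pow_card_pow j c
  set N := m * n with hNdef
  have hNpos : 0 < N := Nat.mul_pos hm0 hn0
  obtain ⟨a, ha1, ha2⟩ := Nat.chineseRemainder hmn k 0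
  obtain ⟨b, hb1, hb2⟩ := Nat.chineseRemainder hmn 0 ℓ
  set g : F[X] := X ^ N - 1 with hg
  have hgmonic : g.Monic := by
    have := monic_X_pow_sub_C (1 : F) hNpos.ne'
    rwa [map_one] at this
  set pb := AdjoinRoot.powerBasis' hgmonic with hpb
  have hdim : pb.dim = N := by
    rw [hpb, AdjoinRoot.powerBasis'_dim, hg, ← C_1, natDegree_X_pow_sub_C]
  set B := pb.basis.reindex (finCongr hdim) with hB
  have hBi : ∀ i : Fin N, B i = AdjoinRoot.root g ^ (i : ℕ) := by
    intro i
    rw [hB, Basis.reindex_apply, pb.basis_eq_pow]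
    simp [hpb, AdjoinRoot.powerBasis'_gen]
  have hrootN : AdjoinRoot.root g ^ N = 1 := by
    have h0 : AdjoinRoot.mk g g = 0 := AdjoinRoot.mk_self
    rw [hg, map_sub, map_pow, AdjoinRoot.mk_X, map_one, sub_eq_zero] at h0
    exact h0
  set Efun : ℕ → AlgebraicClosure F := fun j => (α * β) ^ q ^ j with hEf
  have hαβmem : (α * β) ^ q ^ N = α * β := by
    rw [mul_pow]
    have h1 : α ^ q ^ N = α := by
      rw [pow_q_period' α q m hm0 hαmem N, hNdef, Nat.mul_mod_right, pow_zero, pow_one]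
    have h2 : β ^ q ^ N = β := by
      rw [pow_q_period' β q n hn0 hβmem N, hNdef, Nat.mul_mod_left, pow_zero, pow_one]
    rw [h1, h2]
  have hEper : ∀ j, Efun j = Efun (j % N) := fun j =>
    pow_q_period' (α * β) q N hNpos hαβmem j
  set Φ : AdjoinRoot g →ₗ[F] AlgebraicClosure F := B.constr F (fun i : Fin N => Efun (i : ℕ)) with hΦ
  have hrootmod : ∀ j : ℕ, AdjoinRoot.root g ^ j = AdjoinRoot.root g ^ (j % N) :=
    pow_mod_eq_one _ hrootN
  have hBi' : ∀ (r : ℕ) (hr : r < N), AdjoinRoot.root g ^ r = B ⟨r, hr⟩ := by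
    intro r hr
    rw [hBi ⟨r, hr⟩]
  have hΦpow : ∀ j : ℕ, Φ (AdjoinRoot.root g ^ j) = Efun j := by
    intro j
    rw [hrootmod j]
    have hlt : j % N < N := Nat.mod_lt _ hNpos
    rw [hBi' _ hlt, hΦ, Basis.constr_basis]
    exact (hEper j).symm
  set u : AdjoinRoot g := AdjoinRoot.root g ^ a + AdjoinRoot.root g ^ b with hu
  set γ : AlgebraicClosure F := α ^ q ^ k * β + α * β ^ q ^ ℓ with hγ
  have hγs : ∀ s : ℕ, γ ^ q ^ s = Φ (u * AdjoinRoot.root g ^ s) := by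
    intro s
    have expand : u * AdjoinRoot.root g ^ s
        = AdjoinRoot.root g ^ (a + s) + AdjoinRoot.root g ^ (b + s) := by
      rw [hu, add_mul, ← pow_add, ← pow_add]
    rw [expand, map_add, hΦpow, hΦpow, hγ, hadd s]
    have claim1 : (α ^ q ^ k * β) ^ q ^ s = Efun (a + s) := by
      rw [mul_pow, pow_q_add', hEf]
      dsimp only
      rw [mul_pow]
      have e1 : α ^ q ^ (k + s) = α ^ q ^ (a + s) :=
        pow_q_congr' α q m hm0 hαmem (Nat.ModEq.add_right s ha1).symm
      have e2 : β ^ q ^ s = β ^ q ^ (a + s) := by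
        refine pow_q_congr' β q n hn0 hβmem ?_
        have := (Nat.ModEq.add_right s ha2).symm
        simpa using this
      rw [e1, e2]
    have claim2 : (α * β ^ q ^ ℓ) ^ q ^ s = Efun (b + s) := by
      rw [mul_pow, pow_q_add', hEf]
      dsimp only
      rw [mul_pow]
      have e1 : α ^ q ^ s = α ^ q ^ (b + s) := by
        refine pow_q_congr' α q m hm0 hαmem ?_
        have := (Nat.ModEq.add_right s hb1).symm
        simpa using this
      have e2 : β ^ q ^ (ℓ + s) = β ^ q ^ (b + s) :=
        pow_q_congr' β q n hn0 hβmem (Nat.ModEq.add_right s hb2).symm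
      rw [e1, e2]
    rw [claim1, claim2]
  have hcomp : (⇑Φ ∘ fun s : Fin N => u * AdjoinRoot.root g ^ (s : ℕ))
      = fun s : Fin N => γ ^ q ^ (s : ℕ) := funext fun s => (hγs (s : ℕ)).symm
  have hEind : LinearIndependent F fun s : Fin N => Efun (s : ℕ) :=
    prod_indep hq hm0 hn0 hmn hadd hc α β hαmem hαnormal hβmem hβnormal
  have hker : LinearMap.ker Φ = ⊥ := by
    apply LinearMap.ker_eq_bot'.2
    intro v hv
    have h1 : Φ v = ∑ i, B.repr v i • Efun (i : ℕ) := by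
      conv_lhs => rw [← B.sum_repr v]
      rw [map_sum]
      congr 1
      funext i
      rw [map_smul, hΦ, Basis.constr_basis]
    have hrepr : ∑ i, B.repr v i • Efun (i : ℕ) = 0 := by rw [← h1, hv]
    have hz := Fintype.linearIndependent_iff.1 hEind _ hrepr
    rw [← B.sum_repr v]
    simp [hz]
  have hfinrank : finrank F (AdjoinRoot g) = N := by rw [pb.finrank, hdim]
  have hmain : (LinearIndependent F fun s : Fin N => γ ^ q ^ (s : ℕ)) ↔ IsUnit u := by
    constructor
    · intro h
      have h2 : LinearIndependent F fun s : Fin N => u * AdjoinRoot.root g ^ (s : ℕ) :=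
        LinearIndependent.of_comp Φ (hcomp ▸ h)
      haveI : Nonempty (Fin N) := ⟨⟨0, hNpos⟩⟩
      have hcard : Fintype.card (Fin N) = finrank F (AdjoinRoot g) := by
        rw [Fintype.card_fin, hfinrank]
      have hspan := h2.span_eq_top_of_card_eq_finrank hcard
      have h1 : (1 : AdjoinRoot g) ∈ Submodule.span F
          (Set.range fun s : Fin N => u * AdjoinRoot.root g ^ (s : ℕ)) := by
        rw [hspan]; trivial
      rw [Submodule.mem_span_range_iff_exists_fun] at h1
      obtain ⟨c, hc1⟩ := h1
      refine IsUnit.of_mul_eq_one (∑ s : Fin N, c s • AdjoinRoot.root g ^ (s : ℕ)) ?_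
      rw [Finset.mul_sum, ← hc1]
      congr 1
      funext s
      rw [mul_smul_comm]
    · intro huu
      have hroots : LinearIndependent F fun s : Fin N => AdjoinRoot.root g ^ (s : ℕ) := by
        have := B.linearIndependent
        rwa [show ⇑B = fun s : Fin N => AdjoinRoot.root g ^ (s : ℕ) from funext hBi] at this
      have hmulker : LinearMap.ker (LinearMap.mulLeft F u) = ⊥ := by
        rw [LinearMap.ker_eq_bot]
        intro x y hxy
        exact huu.mul_left_cancel hxy
      have h2 := hroots.map' (LinearMap.mulLeft F u) hmulker
      have h3 := h2.map' Φ hker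
      have : (⇑Φ ∘ (⇑(LinearMap.mulLeft F u) ∘ fun s : Fin N => AdjoinRoot.root g ^ (s : ℕ)))
          = fun s : Fin N => γ ^ q ^ (s : ℕ) := funext fun s => (hγs (s : ℕ)).symm
      rwa [this] at h3
  have hUnit := isUnit_sum_root_iff (F := F) N a b hNpos
  have harith := arith_endgame m n k ℓ a b hm hn hmn ha1 ha2 hb1 hb2
  have hpq : p ∣ q := by
    rw [hqpf]
    exact dvd_pow_self p f.pos.ne'
  constructor
  · intro hodd
    have hp2 : ringChar F ≠ 2 := by
      intro h2
      have heq : Even q := even_iff_two_dvd.2 (by rw [← h2]; exact hpq)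
      exact (Nat.not_odd_iff_even.2 heq) hodd
    rw [hmain, hu, hUnit]
    constructor
    · rintro ⟨-, hdvd⟩
      exact harith.1 hdvd
    · intro hrhs
      exact ⟨hp2, harith.2 hrhs⟩
  · intro heven hind
    have hp2 : ringChar F = 2 := by
      have h2q : (2 : ℕ) ∣ q := even_iff_two_dvd.1 heven
      have h2p : (2 : ℕ) ∣ p := Nat.Prime.dvd_of_dvd_pow Nat.prime_two (hqpf ▸ h2q)
      exact ((Nat.prime_dvd_prime_iff_eq Nat.prime_two hpp).1 h2p).symm
    have := (hUnit.1 (hmain.1 hind)).1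
    exact this hp2
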